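/- Let d ≥ 1 be an integer, μ > 0, and let φ : (0,1) × (0,1) × (0,∞) → [0,1] be measurable. Suppose there is a real number ψ > 2 such that limsup_{r→∞} (log ∫_{r^{−(1+μ)}}^1 ∫_{r^{−(1+μ)}}^1 φ(s,t,r) ds dt) / log r ≤ −ψ. Then for every ε ∈ (0, ψ − 2) there exist A > 1 and C > 0 such that for all α > A: α · ∫_{{x ∈ ℝ^d : |x|^d > α}} ( ∫_{|x|^{−d(1+μ)}}^1 ∫_{|x|^{−d(1+μ)}}^1 φ(u, v, |x|^d) du dv ) dx ≤ C · α^{2−ψ+ε}, where |x| denotes the Euclidean norm on ℝ^d. -/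

import Mathlib

open MeasureTheory Filter

private lemma aux_nonneg (μ : ℝ) (φ : ℝ → ℝ → ℝ → ℝ)
    (hφ_range : ∀ s ∈ Set.Ioo (0 : ℝ) 1, ∀ t ∈ Set.Ioo (0 : ℝ) 1, ∀ r > (0 : ℝ),
      φ s t r ∈ Set.Icc (0 : ℝ) 1)
    {r : ℝ} (hr : 1 < r) :
    0 ≤ ∫ s in Set.Icc (r ^ (-(1 + μ))) 1, ∫ t in Set.Icc (r ^ (-(1 + μ))) 1, φ s t r := by
  have hr0 : (0:ℝ) < r := by linarith
  have hc0 : 0 < r ^ (-(1 + μ)) := Real.rpow_pos_of_pos hr0 _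
  have hae : ∀ᵐ s ∂(volume.restrict (Set.Icc (r ^ (-(1 + μ))) 1)), s ∈ Set.Ioo (0:ℝ) 1 := by
    rw [Measure.restrict_congr_set (Ioo_ae_eq_Icc).symm]
    filter_upwards [ae_restrict_mem measurableSet_Ioo] with s hs
    exact ⟨lt_trans hc0 hs.1, hs.2⟩
  refine setIntegral_nonneg_of_ae_restrict ?_
  filter_upwards [hae] with s hs
  refine setIntegral_nonneg_of_ae_restrict ?_
  filter_upwards [hae] with t ht
  exact (hφ_range s hs t ht r hr0).1

private lemma aux_exp_le {Fr r q : ℝ} (hr : 1 < r)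
    (h : Real.log Fr / Real.log r < -q) : Fr ≤ r ^ (-q) := by
  have hlr : 0 < Real.log r := Real.log_pos hr
  have h' : Real.log Fr < -q * Real.log r := (div_lt_iff₀ hlr).mp h
  rcases le_or_gt Fr 0 with h0 | h0
  · exact h0.trans (Real.rpow_pos_of_pos (by linarith) _).le
  · have h2 : Real.log Fr ≤ Real.log r * -q := by nlinarith
    calc Fr = Real.exp (Real.log Fr) := (Real.exp_log h0).symm
      _ ≤ Real.exp (Real.log r * -q) := Real.exp_le_exp.mpr h2
      _ = r ^ (-q) := (Real.rpow_def_of_pos (by linarith) _).symm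

/-- Analytic heart of Lemma 2.1: if the double integral of the annealed connection
function `φ` with mark cutoff `r^(-(1+μ))` decays like `r^(-ψ)` with `ψ > 2`
(in the sense of a `limsup` of logarithms), then for every `ε ∈ (0, ψ - 2)` the
expected number of long edges
`α · ∫_{|x|^d > α} ∫∫_{[|x|^(-d(1+μ)),1]²} φ(u,v,|x|^d) du dv dx`
is bounded by `C · α^(2-ψ+ε)` for all large `α`. -/
theorem long_edge_bound (d : ℕ) (hd : 1 ≤ d) (μ : ℝ) (hμ : 0 < μ)
    (φ : ℝ → ℝ → ℝ → ℝ)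
    (hφ_meas : Measurable (fun p : ℝ × ℝ × ℝ => φ p.1 p.2.1 p.2.2))
    (hφ_range : ∀ s ∈ Set.Ioo (0 : ℝ) 1, ∀ t ∈ Set.Ioo (0 : ℝ) 1, ∀ r > (0 : ℝ),
      φ s t r ∈ Set.Icc (0 : ℝ) 1)
    (ψ : ℝ) (hψ : 2 < ψ)
    (hlimsup : limsup (fun r : ℝ =>
        Real.log (∫ s in Set.Icc (r ^ (-(1 + μ))) 1,
          ∫ t in Set.Icc (r ^ (-(1 + μ))) 1, φ s t r) / Real.log r) atTop ≤ -ψ) :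
    ∀ ε ∈ Set.Ioo (0 : ℝ) (ψ - 2), ∃ A > (1 : ℝ), ∃ C > (0 : ℝ), ∀ α > A,
      α * ∫ x in {x : EuclideanSpace ℝ (Fin d) | α < ‖x‖ ^ d},
          (∫ u in Set.Icc (‖x‖ ^ (-(d : ℝ) * (1 + μ))) 1,
            ∫ v in Set.Icc (‖x‖ ^ (-(d : ℝ) * (1 + μ))) 1, φ u v (‖x‖ ^ d))
        ≤ C * α ^ (2 - ψ + ε) := by
  intro ε hε
  obtain ⟨hε0, hεψ⟩ := hε
  set E := EuclideanSpace ℝ (Fin d)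
  haveI : Nonempty (Fin d) := ⟨⟨0, hd⟩⟩
  haveI : Nontrivial E := inferInstance
  set F : ℝ → ℝ := fun r => ∫ s in Set.Icc (r ^ (-(1 + μ))) 1,
      ∫ t in Set.Icc (r ^ (-(1 + μ))) 1, φ s t r with hF
  set q : ℝ := ψ - ε with hqdef
  have hq2 : 2 < q := by simp only [hqdef]; linarith
  have hd0 : (0:ℝ) < d := by exact_mod_cast hd
  -- extract eventual bound from limsup
  set u : ℝ → ℝ := fun r => Real.log (F r) / Real.log r with hu
  have hT : {a : ℝ | ∀ᶠ r in atTop, u r ≤ a}.Nonempty := by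
    by_contra h
    rw [Set.not_nonempty_iff_eq_empty] at h
    rw [limsup_eq, h, Real.sInf_empty] at hlimsup
    linarith
  obtain ⟨a, ha, haq⟩ : ∃ a ∈ {a : ℝ | ∀ᶠ r in atTop, u r ≤ a}, a < -q := by
    refine exists_lt_of_csInf_lt hT ?_
    rw [← limsup_eq]
    calc limsup u atTop ≤ -ψ := hlimsup
    _ < -q := by simp only [hqdef]; linarith
  obtain ⟨A₀, hA₀⟩ := eventually_atTop.mp ha
  set A : ℝ := max A₀ 2 with hAdef
  set V : ℝ := (volume (Metric.ball (0:E) 1)).toReal with hV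
  have hV0 : 0 < V := ENNReal.toReal_pos
    (Metric.measure_ball_pos volume _ one_pos).ne' measure_ball_lt_top.ne
  set C : ℝ := (d : ℝ) * V / (d * q - d) with hC
  have hdq : (0:ℝ) < d * q - d := by nlinarith
  refine ⟨A, lt_of_lt_of_le one_lt_two (le_max_right _ _), C, by positivity, ?_⟩
  intro α hα
  have hα2 : (2:ℝ) ≤ A := le_max_right _ _
  have hα1 : (1:ℝ) < α := by linarith [lt_of_le_of_lt hα2 hα]
  have hα0 : (0:ℝ) < α := by linarith
  set p : ℝ := (d : ℝ) * (-q) with hp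
  have hpneg : p < -(d:ℝ) := by nlinarith
  set R : ℝ := α ^ ((d:ℝ)⁻¹) with hR
  have hR1 : 1 < R := Real.one_lt_rpow_iff_of_pos hα0 |>.mpr (Or.inl ⟨hα1, by positivity⟩)
  have hR0 : (0:ℝ) < R := by linarith
  set S : Set E := {x : E | α < ‖x‖ ^ d} with hS
  have hSm : MeasurableSet S := measurableSet_lt measurable_const (measurable_norm.pow_const d)
  set g : ℝ → ℝ := (Set.Ioi R).indicator (fun y => y ^ p) with hg
  -- facts about points of S
  have hxS : ∀ x : E, x ∈ S → 1 < ‖x‖ ∧ R < ‖x‖ ∧ α < ‖x‖ ^ d := by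
    intro x hx
    have hxd : α < ‖x‖ ^ d := hx
    have hn1 : 1 < ‖x‖ := by
      by_contra h
      push_neg at h
      have h2 : ‖x‖ ^ d ≤ 1 := pow_le_one₀ (norm_nonneg x) h
      linarith
    have hRx : R < ‖x‖ := by
      have : R < (‖x‖ ^ d) ^ ((d:ℝ)⁻¹) :=
        Real.rpow_lt_rpow hα0.le hxd (by positivity)
      calc R < (‖x‖ ^ d) ^ ((d:ℝ)⁻¹) := this
      _ = (‖x‖ ^ (d:ℝ)) ^ ((d:ℝ)⁻¹) := by rw [Real.rpow_natCast]
      _ = ‖x‖ ^ ((d:ℝ) * (d:ℝ)⁻¹) := by rw [← Real.rpow_mul (norm_nonneg x)]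
      _ = ‖x‖ := by rw [mul_inv_cancel₀ hd0.ne', Real.rpow_one]
    exact ⟨hn1, hRx, hxd⟩
  -- the integrand equals F (‖x‖^d)
  have hexp : ∀ x : E, (‖x‖ : ℝ) ^ (-(d : ℝ) * (1 + μ)) = (‖x‖ ^ d : ℝ) ^ (-(1 + μ)) := by
    intro x
    rw [← Real.rpow_natCast ‖x‖ d, ← Real.rpow_mul (norm_nonneg x),
      show (d:ℝ) * -(1+μ) = -(d:ℝ) * (1+μ) by ring]
  have hfeq : ∀ x : E,
      (∫ u in Set.Icc (‖x‖ ^ (-(d : ℝ) * (1 + μ))) 1,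
        ∫ v in Set.Icc (‖x‖ ^ (-(d : ℝ) * (1 + μ))) 1, φ u v (‖x‖ ^ d)) = F (‖x‖ ^ d) := by
    intro x
    rw [hF]
    simp only [hexp x]
  -- pointwise bound on S
  have hub : ∀ x : E, x ∈ S → F (‖x‖ ^ d) ≤ g ‖x‖ := by
    intro x hx
    obtain ⟨hn1, hRx, hxd⟩ := hxS x hx
    have hr1 : 1 < ‖x‖ ^ d := one_lt_pow₀ hn1 (by omega)
    have hrA : A₀ ≤ ‖x‖ ^ d := by
      have : A₀ ≤ A := le_max_left _ _
      linarith
    have hle : F (‖x‖ ^ d) ≤ (‖x‖ ^ d : ℝ) ^ (-q) :=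
      aux_exp_le hr1 (lt_of_le_of_lt (hA₀ _ hrA) haq)
    have : ((‖x‖ ^ d : ℝ)) ^ (-q) = ‖x‖ ^ p := by
      rw [← Real.rpow_natCast ‖x‖ d, ← Real.rpow_mul (norm_nonneg x), hp]
    rw [hg, Set.indicator_of_mem (Set.mem_Ioi.mpr hRx)]
    exact this ▸ hle
  -- integrability of g ∘ norm
  have hgmeas : Measurable fun x : E => g ‖x‖ := by
    have : Measurable g := by
      apply Measurable.indicator _ measurableSet_Ioi
      fun_prop
    exact this.comp measurable_norm
  have hgint : Integrable (fun x : E => g ‖x‖) := by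
    have hnr : ((Module.finrank ℝ E : ℝ)) < -p := by
      rw [show Module.finrank ℝ E = d from finrank_euclideanSpace_fin]
      linarith
    refine ((integrable_one_add_norm hnr).const_mul ((2:ℝ) ^ (-p))).mono'
      hgmeas.aestronglyMeasurable ?_
    filter_upwards with x
    rw [Real.norm_eq_abs]
    rcases le_or_gt ‖x‖ R with h | h
    · rw [hg, Set.indicator_of_notMem (by simpa using h)]
      simp only [abs_zero]
      have : (0:ℝ) ≤ (1 + ‖x‖) ^ (-(-p)) := Real.rpow_nonneg (by positivity) _
      positivity
    · rw [hg, Set.indicator_of_mem (Set.mem_Ioi.mpr h), neg_neg,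
        abs_of_nonneg (Real.rpow_nonneg (norm_nonneg x) p)]
      have h1 : 1 ≤ ‖x‖ := by linarith
      have hhalf : (1 + ‖x‖) / 2 ≤ ‖x‖ := by linarith
      have := Real.rpow_le_rpow_of_nonpos (by positivity : (0:ℝ) < (1 + ‖x‖)/2) hhalf
        (by nlinarith : p ≤ 0)
      calc ‖x‖ ^ p ≤ ((1 + ‖x‖)/2) ^ p := this
      _ = (1 + ‖x‖) ^ p / 2 ^ p := Real.div_rpow (by positivity) (by norm_num) p
      _ = 2 ^ (-p) * (1 + ‖x‖) ^ p := by
          rw [Real.rpow_neg (by norm_num : (0:ℝ) ≤ 2)]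
          field_simp
  have hg0 : ∀ y : ℝ, 0 ≤ g y := fun y =>
    Set.indicator_nonneg (fun z hz => Real.rpow_nonneg (le_of_lt (lt_trans hR0 hz)) p) y
  -- step 1 : the set integral is bounded by the integral of g ∘ norm over S
  have step1 : (∫ x in S, (∫ u in Set.Icc (‖x‖ ^ (-(d : ℝ) * (1 + μ))) 1,
        ∫ v in Set.Icc (‖x‖ ^ (-(d : ℝ) * (1 + μ))) 1, φ u v (‖x‖ ^ d)))
      ≤ ∫ x in S, g ‖x‖ := by
    refine integral_mono_of_nonneg ?_ hgint.integrableOn ?_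
    · filter_upwards [ae_restrict_mem hSm] with x hx
      obtain ⟨hn1, _, _⟩ := hxS x hx
      rw [hfeq x]
      exact aux_nonneg μ φ hφ_range (one_lt_pow₀ hn1 (by omega))
    · filter_upwards [ae_restrict_mem hSm] with x hx
      rw [hfeq x]
      exact hub x hx
  -- step 2 : extend to the whole space
  have step2 : (∫ x in S, g ‖x‖) ≤ ∫ x : E, g ‖x‖ := by
    refine setIntegral_le_integral hgint ?_
    filter_upwards with x using hg0 _
  -- step 3 : polar coordinates computation
  have hexplt : (d:ℝ) - 1 + p < -1 := by nlinarith
  have step3 : (∫ x : E, g ‖x‖) = (d:ℝ) * V * (α ^ (1 - q) / (d * q - d)) := by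
    rw [integral_fun_norm_addHaar volume g,
      show Module.finrank ℝ E = d from finrank_euclideanSpace_fin]
    have h1 : ∀ y ∈ Set.Ioi (0:ℝ), y ^ (d - 1) • g y
        = (Set.Ioi R).indicator (fun y => y ^ ((d:ℝ) - 1 + p)) y := by
      intro y hy
      have hy0 : (0:ℝ) < y := hy
      rcases le_or_gt y R with h | h
      · rw [hg]
        rw [Set.indicator_of_notMem (by simpa using h),
          Set.indicator_of_notMem (by simpa using h), smul_zero]
      · rw [hg, Set.indicator_of_mem (Set.mem_Ioi.mpr h), Set.indicator_of_mem (Set.mem_Ioi.mpr h), smul_eq_mul,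
          Real.rpow_add hy0, ← Real.rpow_natCast y (d-1)]
        congr 2
        push_cast [Nat.cast_sub hd]
        ring
    rw [setIntegral_congr_fun measurableSet_Ioi h1,
      setIntegral_indicator measurableSet_Ioi,
      Set.Ioi_inter_Ioi, max_eq_right hR0.le,
      integral_Ioi_rpow_of_lt hexplt hR0]
    have hR2 : R ^ ((d:ℝ) - 1 + p + 1) = α ^ (1 - q) := by
      rw [hR, ← Real.rpow_mul hα0.le]
      congr 1
      rw [hp]
      field_simp
      ring
    have hden : (d:ℝ) - 1 + p + 1 = -((d:ℝ)*q-(d:ℝ)) := by rw [hp]; ring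
    rw [hR2, hden, nsmul_eq_mul, smul_eq_mul, neg_div_neg_eq]
    have hVr : volume.real (Metric.ball (0:E) 1) = V := rfl
    rw [hVr]
    ring
  -- combine
  calc α * ∫ x in S, (∫ u in Set.Icc (‖x‖ ^ (-(d : ℝ) * (1 + μ))) 1,
        ∫ v in Set.Icc (‖x‖ ^ (-(d : ℝ) * (1 + μ))) 1, φ u v (‖x‖ ^ d))
      ≤ α * ((d:ℝ) * V * (α ^ (1 - q) / (d * q - d))) := by
        refine mul_le_mul_of_nonneg_left ?_ hα0.le
        rw [← step3]
        exact step1.trans step2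
  _ = C * α ^ (2 - ψ + ε) := by
      rw [hC, show (2 - ψ + ε : ℝ) = 1 + (1 - q) by rw [hqdef]; ring,
        Real.rpow_add hα0, Real.rpow_one]
      field_simp
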